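/- Let ρ > 0 and let t be the Yule–Simon distribution t_i = ρ · B(i, ρ+1). Then for every integer M ≥ 2, M · B(M, ρ+1) ≥ K(ρ)/(M+ρ)^ρ with the positive constant K(ρ) = Γ(ρ+1)/(4√(2(1+ρ))), and consequently every M-type probability distribution p satisfies ‖p − t‖₁ ≥ T_M = M · B(M, ρ+1) ≥ K(ρ)/(M+ρ)^ρ. -/

import Mathlib

open Real Filter

lemma aux_gamma_base {x ρ : ℝ} (hx : 0 < x) (hρ0 : 0 < ρ) (hρ1 : ρ ≤ 1) :
    Gamma (x + ρ) ≤ Gamma x * x ^ ρ := by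
  have hΓx : 0 < Gamma x := Real.Gamma_pos_of_pos hx
  rcases eq_or_lt_of_le hρ1 with h1 | h1
  · subst h1
    rw [Real.Gamma_add_one hx.ne', Real.rpow_one]
    ring_nf
    exact le_refl _
  · have key := Real.Gamma_mul_add_mul_le_rpow_Gamma_mul_rpow_Gamma hx
      (show (0:ℝ) < x + 1 by linarith) (show (0:ℝ) < 1 - ρ by linarith) hρ0
      (by ring)
    have harg : (1 - ρ) * x + ρ * (x + 1) = x + ρ := by ring
    rw [harg] at key
    calc Gamma (x + ρ) ≤ Gamma x ^ (1 - ρ) * Gamma (x + 1) ^ ρ := key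
      _ = Gamma x * x ^ ρ := by
          rw [Real.Gamma_add_one hx.ne', Real.mul_rpow hx.le hΓx.le, ← mul_assoc,
            mul_right_comm, ← Real.rpow_add hΓx, show 1 - ρ + ρ = (1:ℝ) by ring,
            Real.rpow_one]

lemma aux_gamma_upper {x ρ : ℝ} (hx : 0 < x) (hρ0 : 0 < ρ) :
    Gamma (x + ρ) ≤ Gamma x * (x + ρ) ^ ρ := by
  have base : ∀ ρ : ℝ, 0 < ρ → ρ ≤ 1 → ∀ x : ℝ, 0 < x →
      Gamma (x + ρ) ≤ Gamma x * (x + ρ) ^ ρ := by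
    intro ρ hρ0 hρ1 x hx
    calc Gamma (x + ρ) ≤ Gamma x * x ^ ρ := aux_gamma_base hx hρ0 hρ1
      _ ≤ Gamma x * (x + ρ) ^ ρ :=
          mul_le_mul_of_nonneg_left
            (Real.rpow_le_rpow hx.le (by linarith) hρ0.le)
            (Real.Gamma_pos_of_pos hx).le
  have main : ∀ n : ℕ, ∀ ρ : ℝ, 0 < ρ → ρ ≤ n + 1 → ∀ x : ℝ, 0 < x →
      Gamma (x + ρ) ≤ Gamma x * (x + ρ) ^ ρ := by
    intro n
    induction n with
    | zero =>
      intro ρ hρ0 hρ1 x hx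
      exact base ρ hρ0 (by simpa using hρ1) x hx
    | succ n ih =>
      intro ρ hρ0 hρ1 x hx
      by_cases hle : ρ ≤ 1
      · exact base ρ hρ0 hle x hx
      · push_neg at hle
        have hρ1' : 0 < ρ - 1 := by linarith
        have h2 : Gamma (x + (ρ - 1)) ≤ Gamma x * (x + (ρ - 1)) ^ (ρ - 1) :=
          ih (ρ - 1) hρ1' (by push_cast at hρ1 ⊢; linarith) x hx
        have hxρ : (0:ℝ) < x + (ρ - 1) := by linarith
        have e1 : Gamma (x + ρ) = (x + (ρ - 1)) * Gamma (x + (ρ - 1)) := by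
          rw [show x + ρ = (x + (ρ - 1)) + 1 by ring, Real.Gamma_add_one hxρ.ne']
        have hpow := Real.rpow_add hxρ (ρ - 1) 1
        rw [Real.rpow_one] at hpow
        rw [show ρ - 1 + 1 = ρ by ring] at hpow
        calc Gamma (x + ρ) = (x + (ρ - 1)) * Gamma (x + (ρ - 1)) := e1
          _ ≤ (x + (ρ - 1)) * (Gamma x * (x + (ρ - 1)) ^ (ρ - 1)) :=
              mul_le_mul_of_nonneg_left h2 hxρ.le
          _ = Gamma x * (x + (ρ - 1)) ^ ρ := by rw [hpow]; ring
          _ ≤ Gamma x * (x + ρ) ^ ρ :=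
              mul_le_mul_of_nonneg_left
                (Real.rpow_le_rpow hxρ.le (by linarith) hρ0.le)
                (Real.Gamma_pos_of_pos hx).le
  obtain ⟨n, hn⟩ := exists_nat_ge ρ
  exact main n ρ hρ0 (by linarith) x hx

lemma aux_gamma_lower {x ρ : ℝ} (hx : 0 < x) (hρ0 : 0 < ρ) :
    Gamma (x + 1) * x ^ ρ ≤ Gamma (x + 1 + ρ) := by
  have hΓx : 0 < Gamma x := Real.Gamma_pos_of_pos hx
  have hΓ1 : 0 < Gamma (x + 1) := Real.Gamma_pos_of_pos (by linarith)
  have hΓ2 : 0 < Gamma (x + 1 + ρ) := Real.Gamma_pos_of_pos (by linarith)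
  have hab : ρ / (1 + ρ) + 1 / (1 + ρ) = 1 := by field_simp; ring
  have key := Real.Gamma_mul_add_mul_le_rpow_Gamma_mul_rpow_Gamma hx
    (show (0:ℝ) < x + 1 + ρ by linarith)
    (show (0:ℝ) < ρ / (1 + ρ) by positivity)
    (show (0:ℝ) < 1 / (1 + ρ) by positivity) hab
  have harg : ρ / (1 + ρ) * x + 1 / (1 + ρ) * (x + 1 + ρ) = x + 1 := by
    field_simp; ring
  rw [harg] at key
  -- raise both sides to the power (1 + ρ)
  have h1ρ : (0:ℝ) < 1 + ρ := by linarith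
  have key2 := Real.rpow_le_rpow hΓ1.le key h1ρ.le
  rw [Real.mul_rpow (Real.rpow_nonneg hΓx.le _) (Real.rpow_nonneg hΓ2.le _),
    ← Real.rpow_mul hΓx.le, ← Real.rpow_mul hΓ2.le,
    show ρ / (1 + ρ) * (1 + ρ) = ρ by field_simp,
    show 1 / (1 + ρ) * (1 + ρ) = 1 by field_simp,
    Real.rpow_one] at key2
  have e : Gamma (x + 1) ^ (1 + ρ) = Gamma (x + 1) * x ^ ρ * Gamma x ^ ρ := by
    rw [Real.rpow_add hΓ1, Real.rpow_one, Real.Gamma_add_one hx.ne',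
      Real.mul_rpow hx.le hΓx.le]
    ring
  rw [e] at key2
  have hpos : 0 < Gamma x ^ ρ := Real.rpow_pos_of_pos hΓx ρ
  refine le_of_mul_le_mul_right ?_ hpos
  calc Gamma (x + 1) * x ^ ρ * Gamma x ^ ρ ≤ Gamma x ^ ρ * Gamma (x + 1 + ρ) := key2
    _ = Gamma (x + 1 + ρ) * Gamma x ^ ρ := by ring

/-- The Beta function `B(x, y) = Γ(x)Γ(y)/Γ(x+y)`. -/
noncomputable def betaFn (x y : ℝ) : ℝ :=
  Real.Gamma x * Real.Gamma y / Real.Gamma (x + y)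

/-- An `M`-type distribution: every entry is `c_i / M` for a nonnegative integer
`c_i ≤ M`, and the entries sum to one. -/
def IsMType (M : ℕ) (p : ℕ → ℝ) : Prop :=
  HasSum p 1 ∧ ∃ c : ℕ → ℕ, (∀ i, c i ≤ M) ∧ ∀ i, p i = (c i : ℝ) / M

lemma betaFn_pos {x y : ℝ} (hx : 0 < x) (hy : 0 < y) : 0 < betaFn x y :=
  div_pos (mul_pos (Real.Gamma_pos_of_pos hx) (Real.Gamma_pos_of_pos hy))
    (Real.Gamma_pos_of_pos (by linarith))

noncomputable def auxF (ρ : ℝ) (n : ℕ) : ℝ :=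
  Gamma ((n : ℝ) + 1) * Gamma (ρ + 1) / Gamma ((n : ℝ) + 1 + ρ)

lemma auxF_pos {ρ : ℝ} (hρ : 0 < ρ) (n : ℕ) : 0 < auxF ρ n := by
  have h1 : (0:ℝ) < (n:ℝ) + 1 := by positivity
  exact div_pos (mul_pos (Real.Gamma_pos_of_pos h1)
    (Real.Gamma_pos_of_pos (by linarith))) (Real.Gamma_pos_of_pos (by linarith))

lemma aux_telescope {ρ : ℝ} (hρ : 0 < ρ) (n : ℕ) :
    ρ * betaFn ((n : ℝ) + 1) (ρ + 1) = auxF ρ n - auxF ρ (n + 1) := by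
  set x : ℝ := (n : ℝ) + 1 with hx
  have hx0 : 0 < x := by positivity
  have hA : 0 < Gamma x := Real.Gamma_pos_of_pos hx0
  have hB : 0 < Gamma (ρ + 1) := Real.Gamma_pos_of_pos (by linarith)
  have hC : 0 < Gamma (x + ρ) := Real.Gamma_pos_of_pos (by linarith)
  have e1 : Gamma (x + (ρ + 1)) = (x + ρ) * Gamma (x + ρ) := by
    rw [show x + (ρ + 1) = (x + ρ) + 1 by ring,
      Real.Gamma_add_one (by positivity : (x + ρ) ≠ 0)]
  have e2 : Gamma (x + 1) = x * Gamma x := Real.Gamma_add_one hx0.ne'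
  have e3 : Gamma (x + 1 + ρ) = (x + ρ) * Gamma (x + ρ) := by
    rw [show x + 1 + ρ = (x + ρ) + 1 by ring,
      Real.Gamma_add_one (by positivity : (x + ρ) ≠ 0)]
  have ecast : ((n + 1 : ℕ) : ℝ) = x := by push_cast; rw [hx]
  unfold auxF betaFn
  rw [ecast, e1, e2, e3]
  have hxρ : 0 < x + ρ := by linarith
  field_simp
  ring

lemma aux_tendsto {ρ : ℝ} (hρ : 0 < ρ) : Tendsto (auxF ρ) atTop (nhds 0) := by
  have hB : 0 < Gamma (ρ + 1) := Real.Gamma_pos_of_pos (by linarith)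
  have hbound : ∀ n : ℕ, 1 ≤ n → auxF ρ n ≤ Gamma (ρ + 1) / (n : ℝ) ^ ρ := by
    intro n hn
    have hn0 : (0:ℝ) < (n:ℝ) := by exact_mod_cast hn
    have hlow := aux_gamma_lower hn0 hρ
    have hΓ1 : 0 < Gamma ((n:ℝ) + 1) := Real.Gamma_pos_of_pos (by linarith)
    have hpow : (0:ℝ) < (n:ℝ) ^ ρ := Real.rpow_pos_of_pos hn0 ρ
    have hΓ2 : 0 < Gamma ((n:ℝ) + 1 + ρ) := Real.Gamma_pos_of_pos (by linarith)
    unfold auxF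
    rw [div_le_div_iff₀ hΓ2 hpow]
    nlinarith [mul_le_mul_of_nonneg_left hlow hB.le]
  have hlim : Tendsto (fun n : ℕ => Gamma (ρ + 1) / (n : ℝ) ^ ρ) atTop (nhds 0) := by
    apply Filter.Tendsto.div_atTop (tendsto_const_nhds)
    exact (tendsto_rpow_atTop hρ).comp tendsto_natCast_atTop_atTop
  refine squeeze_zero' ?_ ?_ hlim
  · exact Eventually.of_forall fun n => (auxF_pos hρ n).le
  · filter_upwards [eventually_ge_atTop 1] with n hn using hbound n hn

lemma aux_hasSum {ρ : ℝ} (hρ : 0 < ρ) (N : ℕ) :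
    HasSum (fun i : ℕ => ρ * betaFn ((N : ℝ) + (i : ℝ) + 1) (ρ + 1)) (auxF ρ N) := by
  have hnn : ∀ i : ℕ, 0 ≤ ρ * betaFn ((N : ℝ) + (i : ℝ) + 1) (ρ + 1) := by
    intro i
    have := betaFn_pos (show (0:ℝ) < (N:ℝ) + (i:ℝ) + 1 by positivity)
      (show (0:ℝ) < ρ + 1 by linarith)
    positivity
  rw [hasSum_iff_tendsto_nat_of_nonneg hnn]
  have hterm : ∀ i : ℕ, ρ * betaFn ((N : ℝ) + (i : ℝ) + 1) (ρ + 1)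
      = auxF ρ (N + i) - auxF ρ (N + i + 1) := by
    intro i
    have := aux_telescope hρ (N + i)
    rw [show (((N + i : ℕ)) : ℝ) + 1 = (N : ℝ) + (i : ℝ) + 1 by push_cast; ring] at this
    exact this
  have hsum : ∀ n : ℕ, ∑ i ∈ Finset.range n, ρ * betaFn ((N : ℝ) + (i : ℝ) + 1) (ρ + 1)
      = auxF ρ N - auxF ρ (N + n) := by
    intro n
    rw [Finset.sum_congr rfl fun i _ => hterm i]
    exact Finset.sum_range_sub' (fun i => auxF ρ (N + i)) n
  simp only [hsum]
  have h2 : Tendsto (fun n : ℕ => auxF ρ (N + n)) atTop (nhds 0) := by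
    have := (aux_tendsto hρ).comp (tendsto_add_atTop_nat N)
    simpa [Function.comp_def, Nat.add_comm] using this
  simpa using tendsto_const_nhds.sub h2

lemma aux_hasSum_t {ρ : ℝ} (hρ : 0 < ρ) :
    HasSum (fun i : ℕ => ρ * betaFn ((i : ℝ) + 1) (ρ + 1)) 1 := by
  have h := aux_hasSum hρ 0
  have hF0 : auxF ρ 0 = 1 := by
    unfold auxF
    norm_num [Real.Gamma_one]
    rw [show (1:ℝ) + ρ = ρ + 1 by ring]
    field_simp
  rw [hF0] at h
  simpa using h

lemma aux_sum_card_le {t : ℕ → ℝ} (ht : Antitone t) (h0 : ∀ i, 0 ≤ t i) :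
    ∀ (M : ℕ) (S : Finset ℕ), S.card ≤ M → ∑ i ∈ S, t i ≤ ∑ i ∈ Finset.range M, t i := by
  intro M
  induction M with
  | zero => intro S hS; simp [Finset.card_eq_zero.mp (Nat.le_zero.mp hS)]
  | succ M ih =>
    intro S hS
    by_cases hc : S.card ≤ M
    · calc ∑ i ∈ S, t i ≤ ∑ i ∈ Finset.range M, t i := ih S hc
        _ ≤ ∑ i ∈ Finset.range (M + 1), t i := by
            rw [Finset.sum_range_succ]; linarith [h0 M]
    · have hcard : S.card = M + 1 := le_antisymm hS (not_le.mp hc)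
      have hne : S.Nonempty := Finset.card_pos.mp (by omega)
      have hmem : S.max' hne ∈ S := S.max'_mem hne
      have hsub : S ⊆ Finset.range (S.max' hne + 1) := fun a ha =>
        Finset.mem_range.mpr (Nat.lt_succ_of_le (S.le_max' a ha))
      have hMm : M ≤ S.max' hne := by
        have := Finset.card_le_card hsub
        rw [hcard, Finset.card_range] at this; omega
      have herase : (S.erase (S.max' hne)).card ≤ M := by
        rw [Finset.card_erase_of_mem hmem, hcard]; omega
      calc ∑ i ∈ S, t i = t (S.max' hne) + ∑ i ∈ S.erase (S.max' hne), t i :=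
            (Finset.add_sum_erase S t hmem).symm
        _ ≤ t M + ∑ i ∈ Finset.range M, t i := add_le_add (ht hMm) (ih _ herase)
        _ = ∑ i ∈ Finset.range (M + 1), t i := by rw [Finset.sum_range_succ]; ring

lemma aux_betaFn_anti {x ρ : ℝ} (hx : 0 < x) (hρ : 0 < ρ) :
    betaFn (x + 1) (ρ + 1) ≤ betaFn x (ρ + 1) := by
  have hA : 0 < Gamma x := Real.Gamma_pos_of_pos hx
  have hB : 0 < Gamma (ρ + 1) := Real.Gamma_pos_of_pos (by linarith)
  have hC : 0 < Gamma (x + (ρ + 1)) := Real.Gamma_pos_of_pos (by linarith)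
  unfold betaFn
  rw [Real.Gamma_add_one hx.ne',
    show x + 1 + (ρ + 1) = (x + (ρ + 1)) + 1 by ring,
    Real.Gamma_add_one (by positivity : x + (ρ + 1) ≠ 0)]
  rw [div_le_div_iff₀ (by positivity) hC]
  nlinarith [mul_pos (mul_pos hA hB) hC]

/-- for the Yule–Simon distribution `t_i = ρ B(i, ρ+1)` and every
integer `M ≥ 2`, one has `M B(M, ρ+1) ≥ K(ρ)/(M+ρ)^ρ` with
`K(ρ) = Γ(ρ+1)/(4√(2(1+ρ)))`; moreover the tail mass equals `T_M = M B(M, ρ+1)` and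
every `M`-type distribution `p` satisfies `‖p − t‖₁ ≥ T_M`. -/
theorem stmt11 (ρ : ℝ) (hρ : 0 < ρ) (M : ℕ) (hM : 2 ≤ M) :
    Real.Gamma (ρ + 1) / (4 * Real.sqrt (2 * (1 + ρ))) / ((M : ℝ) + ρ) ^ ρ ≤
      (M : ℝ) * betaFn (M : ℝ) (ρ + 1) ∧
    (∑' i : ℕ, ρ * betaFn ((M : ℝ) + 1 + (i : ℝ)) (ρ + 1)) =
      (M : ℝ) * betaFn (M : ℝ) (ρ + 1) ∧
    ∀ p : ℕ → ℝ, IsMType M p →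
      (M : ℝ) * betaFn (M : ℝ) (ρ + 1) ≤
        ∑' i : ℕ, |p i - ρ * betaFn ((i : ℝ) + 1) (ρ + 1)| := by
  have hρ1 : (0:ℝ) < ρ + 1 := by linarith
  have hM0 : (0:ℝ) < (M:ℝ) := by
    have : 0 < M := by omega
    exact_mod_cast this
  have hB : 0 < Gamma (ρ + 1) := Real.Gamma_pos_of_pos hρ1
  have hFM : auxF ρ M = (M:ℝ) * betaFn (M:ℝ) (ρ + 1) := by
    unfold auxF betaFn
    rw [Real.Gamma_add_one hM0.ne', show (M:ℝ) + (ρ + 1) = (M:ℝ) + 1 + ρ by ring]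
    ring
  have hpow1 : (0:ℝ) < ((M:ℝ) + ρ) ^ ρ := Real.rpow_pos_of_pos (by linarith) ρ
  have hpow2 : (0:ℝ) < ((M:ℝ) + 1 + ρ) ^ ρ := Real.rpow_pos_of_pos (by linarith) ρ
  have hs1 : (1:ℝ) ≤ Real.sqrt (2 * (1 + ρ)) := by
    have h := Real.sqrt_le_sqrt (show (1:ℝ) ≤ 2 * (1 + ρ) by linarith)
    rwa [Real.sqrt_one] at h
  have step1 : Gamma (ρ + 1) / ((M:ℝ) + 1 + ρ) ^ ρ ≤ auxF ρ M := by
    have hup := aux_gamma_upper (show (0:ℝ) < (M:ℝ) + 1 by linarith) hρ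
    have hΓ1 : 0 < Gamma ((M:ℝ) + 1) := Real.Gamma_pos_of_pos (by linarith)
    have hΓ2 : 0 < Gamma ((M:ℝ) + 1 + ρ) := Real.Gamma_pos_of_pos (by linarith)
    unfold auxF
    rw [div_le_div_iff₀ hpow2 hΓ2]
    nlinarith [mul_le_mul_of_nonneg_left hup hB.le]
  have hMρ : (0:ℝ) < (M:ℝ) + ρ := by linarith
  have step2 : ((M:ℝ) + 1 + ρ) ^ ρ ≤ 4 * Real.sqrt (2 * (1 + ρ)) * ((M:ℝ) + ρ) ^ ρ := by
    have h1 : (M:ℝ) + 1 + ρ ≤ ((M:ℝ) + ρ) * Real.exp (1 / ((M:ℝ) + ρ)) := by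
      have hexp := Real.add_one_le_exp (1 / ((M:ℝ) + ρ))
      calc (M:ℝ) + 1 + ρ = ((M:ℝ) + ρ) * (1 + 1 / ((M:ℝ) + ρ)) := by field_simp; ring
        _ ≤ ((M:ℝ) + ρ) * Real.exp (1 / ((M:ℝ) + ρ)) := by
            apply mul_le_mul_of_nonneg_left _ hMρ.le
            linarith
    have h2 : ((M:ℝ) + 1 + ρ) ^ ρ ≤ (((M:ℝ) + ρ) * Real.exp (1 / ((M:ℝ) + ρ))) ^ ρ :=
      Real.rpow_le_rpow (by linarith) h1 hρ.le
    have h3 : (((M:ℝ) + ρ) * Real.exp (1 / ((M:ℝ) + ρ))) ^ ρ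
        = ((M:ℝ) + ρ) ^ ρ * Real.exp (1 / ((M:ℝ) + ρ) * ρ) := by
      rw [Real.mul_rpow hMρ.le (Real.exp_pos _).le, ← Real.exp_mul]
    have h4 : Real.exp (1 / ((M:ℝ) + ρ) * ρ) ≤ Real.exp 1 := by
      apply Real.exp_le_exp.mpr
      rw [div_mul_eq_mul_div, one_mul, div_le_one hMρ]
      linarith
    have h5 : Real.exp 1 ≤ 4 := Real.exp_one_lt_d9.le.trans (by norm_num)
    calc ((M:ℝ) + 1 + ρ) ^ ρ ≤ ((M:ℝ) + ρ) ^ ρ * Real.exp (1 / ((M:ℝ) + ρ) * ρ) :=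
          h3 ▸ h2
      _ ≤ ((M:ℝ) + ρ) ^ ρ * 4 :=
          mul_le_mul_of_nonneg_left (h4.trans h5) hpow1.le
      _ ≤ 4 * Real.sqrt (2 * (1 + ρ)) * ((M:ℝ) + ρ) ^ ρ := by nlinarith
  have part1 : Real.Gamma (ρ + 1) / (4 * Real.sqrt (2 * (1 + ρ))) / ((M : ℝ) + ρ) ^ ρ ≤
      (M : ℝ) * betaFn (M : ℝ) (ρ + 1) := by
    rw [div_div]
    calc Gamma (ρ + 1) / (4 * Real.sqrt (2 * (1 + ρ)) * ((M:ℝ) + ρ) ^ ρ)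
        ≤ Gamma (ρ + 1) / (((M:ℝ) + 1 + ρ) ^ ρ) :=
          div_le_div_of_nonneg_left hB.le hpow2 step2
      _ ≤ auxF ρ M := step1
      _ = (M:ℝ) * betaFn (M:ℝ) (ρ + 1) := hFM
  have hsum2 := aux_hasSum hρ M
  have part2 : (∑' i : ℕ, ρ * betaFn ((M : ℝ) + 1 + (i : ℝ)) (ρ + 1)) =
      (M : ℝ) * betaFn (M : ℝ) (ρ + 1) := by
    have he : (fun i : ℕ => ρ * betaFn ((M:ℝ) + 1 + (i:ℝ)) (ρ + 1))
        = fun i : ℕ => ρ * betaFn ((M:ℝ) + (i:ℝ) + 1) (ρ + 1) := by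
      funext i; rw [show (M:ℝ) + 1 + (i:ℝ) = (M:ℝ) + (i:ℝ) + 1 by ring]
    rw [he, hsum2.tsum_eq, hFM]
  refine ⟨part1, part2, ?_⟩
  rintro p ⟨hp1, c, hcle, hpc⟩
  set t : ℕ → ℝ := fun i => ρ * betaFn ((i:ℝ) + 1) (ρ + 1) with htdef
  have ht0 : ∀ i, 0 ≤ t i := by
    intro i
    have := betaFn_pos (show (0:ℝ) < (i:ℝ) + 1 by positivity) hρ1
    simp only [htdef]
    positivity
  have htanti : Antitone t := by
    apply antitone_nat_of_succ_le
    intro n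
    have h := aux_betaFn_anti (show (0:ℝ) < (n:ℝ) + 1 by positivity) hρ
    have hcast : ((n + 1 : ℕ):ℝ) + 1 = ((n:ℝ) + 1) + 1 := by push_cast; ring
    simp only [htdef, hcast]
    exact mul_le_mul_of_nonneg_left h hρ.le
  have ht1 : HasSum t 1 := aux_hasSum_t hρ
  have hpnn : ∀ i, 0 ≤ p i := fun i => by rw [hpc i]; positivity
  have hcsum : HasSum (fun i => (c i : ℝ)) (M:ℝ) := by
    have h := hp1.mul_left (M:ℝ)
    rw [mul_one] at h
    have e : (fun i => (c i : ℝ)) = fun i => (M:ℝ) * p i := by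
      funext i
      rw [hpc i]; field_simp
    rw [e]; exact h
  have hcnn : ∀ i, (0:ℝ) ≤ (c i : ℝ) := fun i => Nat.cast_nonneg _
  have hfin : {i | c i ≠ 0}.Finite := by
    by_contra hinf
    rw [← Set.Infinite] at hinf
    obtain ⟨F, hFsub, hFcard⟩ := hinf.exists_subset_card_eq (M + 1)
    have h1 : ((M:ℝ) + 1) ≤ ∑ i ∈ F, (c i : ℝ) := by
      have hge : ∀ i ∈ F, (1:ℝ) ≤ (c i : ℝ) := fun i hi => by
        have hne : c i ≠ 0 := hFsub hi
        exact_mod_cast Nat.one_le_iff_ne_zero.mpr hne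
      calc ((M:ℝ) + 1) = ∑ _i ∈ F, (1:ℝ) := by
            rw [Finset.sum_const, hFcard]; push_cast; ring
        _ ≤ ∑ i ∈ F, (c i : ℝ) := Finset.sum_le_sum hge
    have h2 : ∑ i ∈ F, (c i : ℝ) ≤ (M:ℝ) := sum_le_hasSum F (fun i _ => hcnn i) hcsum
    linarith
  set S : Finset ℕ := hfin.toFinset with hSdef
  have hmemS : ∀ i, i ∈ S ↔ c i ≠ 0 := fun i => hfin.mem_toFinset
  have hScard : S.card ≤ M := by
    have h1 : (S.card : ℝ) ≤ ∑ i ∈ S, (c i : ℝ) := by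
      calc (S.card : ℝ) = ∑ _i ∈ S, (1:ℝ) := by rw [Finset.sum_const]; simp
        _ ≤ ∑ i ∈ S, (c i : ℝ) := Finset.sum_le_sum fun i hi => by
            exact_mod_cast Nat.one_le_iff_ne_zero.mpr ((hmemS i).mp hi)
    have h2 : ∑ i ∈ S, (c i : ℝ) ≤ (M:ℝ) := sum_le_hasSum S (fun i _ => hcnn i) hcsum
    exact_mod_cast h1.trans h2
  have hpS : ∀ i ∉ S, p i = 0 := by
    intro i hi
    have hc0 : c i = 0 := by
      by_contra h
      exact hi ((hmemS i).mpr h)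
    rw [hpc i, hc0]
    simp
  have hind : HasSum (fun i => if i ∈ S then t i else 0) (∑ i ∈ S, t i) := by
    have h := hasSum_sum_of_ne_finset_zero (s := S) (L := SummationFilter.unconditional ℕ)
      (f := fun i => if i ∈ S then t i else 0) (fun i hi => if_neg hi)
    rwa [Finset.sum_congr rfl (fun i hi => if_pos hi)] at h
  have hg : HasSum (fun i => if i ∈ S then 0 else t i) (1 - ∑ i ∈ S, t i) := by
    have h := ht1.sub hind
    have e : (fun i => if i ∈ S then 0 else t i) = fun b => t b - if b ∈ S then t b else 0 := by
      funext i; by_cases hi : i ∈ S <;> simp [hi]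
    rw [e]; exact h
  have habs_le : ∀ i, |p i - t i| ≤ p i + t i := fun i => by
    have h := abs_sub (p i) (t i)
    rwa [abs_of_nonneg (hpnn i), abs_of_nonneg (ht0 i)] at h
  have hsummable : Summable (fun i => |p i - t i|) :=
    Summable.of_nonneg_of_le (fun i => abs_nonneg _) habs_le (hp1.summable.add ht1.summable)
  have hkey : ∀ i, (if i ∈ S then 0 else t i) ≤ |p i - t i| := by
    intro i
    by_cases hi : i ∈ S
    · simp [hi, abs_nonneg]
    · simp only [hi, if_false]
      rw [hpS i hi]
      rw [zero_sub, abs_neg, abs_of_nonneg (ht0 i)]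
  have htail : auxF ρ M = 1 - ∑ i ∈ Finset.range M, t i := by
    have h' : HasSum (fun i : ℕ => t (i + M)) (auxF ρ M) := by
      have he : (fun i : ℕ => t (i + M))
          = fun i : ℕ => ρ * betaFn ((M:ℝ) + (i:ℝ) + 1) (ρ + 1) := by
        funext i
        simp only [htdef]
        rw [show ((i + M : ℕ) : ℝ) + 1 = (M:ℝ) + (i:ℝ) + 1 by push_cast; ring]
      rw [he]
      exact hsum2
    have h2 := (hasSum_nat_add_iff (f := t) M).mp h'
    have h3 := ht1.unique h2
    linarith
  calc (M:ℝ) * betaFn (M:ℝ) (ρ + 1) = auxF ρ M := hFM.symm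
    _ = 1 - ∑ i ∈ Finset.range M, t i := htail
    _ ≤ 1 - ∑ i ∈ S, t i := by
        linarith [aux_sum_card_le htanti ht0 M S hScard]
    _ = ∑' i, (if i ∈ S then 0 else t i) := hg.tsum_eq.symm
    _ ≤ ∑' i, |p i - t i| := Summable.tsum_le_tsum hkey hg.summable hsummable
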